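/- For the ℓ-covered circle Y(u) = (a/ℓ)(sin ℓu, -cos ℓu) + (b/ℓ)(cos ℓu, sin ℓu) + (c,d) with ℓ a positive integer, the Dirichlet energy is Q[Y] = π(a²+b²), the signed area is A[Y] = π(a²+b²)/ℓ, and hence E[Y] = Q[Y]/A[Y] = ℓ. In particular the energy of any equilibrium is a positive integer. -/

import Mathlib

open Real intervalIntegral

/-- Rotation by π/2 in the plane. -/
def rot2 (p : ℝ × ℝ) : ℝ × ℝ := (-p.2, p.1)

/-- Euclidean dot product on ℝ². -/
def dotp (p q : ℝ × ℝ) : ℝ := p.1 * q.1 + p.2 * q.2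

/-- Squared Euclidean norm on ℝ². -/
def nsq (p : ℝ × ℝ) : ℝ := p.1 ^ 2 + p.2 ^ 2

lemma int_sin_ml (ℓ : ℕ) (hl : 0 < ℓ) :
    ∫ u in (0:ℝ)..(2*π), Real.sin ((ℓ:ℝ)*u) = 0 := by
  have hc : (ℓ:ℝ) ≠ 0 := Nat.cast_ne_zero.mpr hl.ne'
  rw [intervalIntegral.integral_comp_mul_left (fun x => Real.sin x) hc, integral_sin]
  have h1 : Real.cos ((ℓ:ℝ) * (2*π)) = 1 := Real.cos_nat_mul_two_pi ℓ
  simp [h1]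

lemma int_cos_ml (ℓ : ℕ) (hl : 0 < ℓ) :
    ∫ u in (0:ℝ)..(2*π), Real.cos ((ℓ:ℝ)*u) = 0 := by
  have hc : (ℓ:ℝ) ≠ 0 := Nat.cast_ne_zero.mpr hl.ne'
  rw [intervalIntegral.integral_comp_mul_left (fun x => Real.cos x) hc, integral_cos]
  have h1 : Real.sin ((ℓ:ℝ) * (2*π)) = 0 := by
    have := Real.sin_nat_mul_pi (2*ℓ)
    push_cast at this
    rw [show (ℓ:ℝ) * (2*π) = 2*ℓ*π by ring]
    exact this
  simp [h1]

/-- for the `ℓ`-covered circle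
`Y(u) = (a/ℓ)(sin ℓu, -cos ℓu) + (b/ℓ)(cos ℓu, sin ℓu) + (c,d)` with `ℓ` a positive integer,
the Dirichlet energy is `Q[Y] = π(a²+b²)`, the signed area is `A[Y] = π(a²+b²)/ℓ`, and hence
(for a genuine, non-point circle) `E[Y] = Q[Y]/A[Y] = ℓ`: the energy of any equilibrium is a
positive integer. -/
theorem stmt10 (a b c d : ℝ) (ℓ : ℕ) (hl : 0 < ℓ) (Y : ℝ → ℝ × ℝ)
    (hY : ∀ u, Y u =
      (a / (ℓ : ℝ)) • ((Real.sin (ℓ * u), -Real.cos (ℓ * u)) : ℝ × ℝ) +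
        (b / (ℓ : ℝ)) • ((Real.cos (ℓ * u), Real.sin (ℓ * u)) : ℝ × ℝ) + ((c, d) : ℝ × ℝ)) :
    (1/2 : ℝ) * (∫ u in (0:ℝ)..(2*π), nsq (deriv Y u)) = π * (a ^ 2 + b ^ 2) ∧
      -(1/2 : ℝ) * (∫ u in (0:ℝ)..(2*π), dotp (Y u) (rot2 (deriv Y u))) =
        π * (a ^ 2 + b ^ 2) / (ℓ : ℝ) ∧
      (a ^ 2 + b ^ 2 ≠ 0 →
        ((1/2 : ℝ) * ∫ u in (0:ℝ)..(2*π), nsq (deriv Y u)) /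
            (-(1/2 : ℝ) * ∫ u in (0:ℝ)..(2*π), dotp (Y u) (rot2 (deriv Y u))) = (ℓ : ℝ)) := by
  have hc : (ℓ:ℝ) ≠ 0 := Nat.cast_ne_zero.mpr hl.ne'
  -- derivative
  have hderiv : ∀ u, deriv Y u =
      (a * Real.cos ((ℓ:ℝ)*u) - b * Real.sin ((ℓ:ℝ)*u),
       a * Real.sin ((ℓ:ℝ)*u) + b * Real.cos ((ℓ:ℝ)*u)) := by
    intro u
    have hid : HasDerivAt (fun u : ℝ => (ℓ:ℝ) * u) (ℓ:ℝ) u := by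
      simpa using (hasDerivAt_id u).const_mul (ℓ:ℝ)
    have hs : HasDerivAt (fun u : ℝ => Real.sin ((ℓ:ℝ)*u)) ((ℓ:ℝ) * Real.cos ((ℓ:ℝ)*u)) u := by
      simpa [mul_comm] using hid.sin
    have hco : HasDerivAt (fun u : ℝ => Real.cos ((ℓ:ℝ)*u)) (-((ℓ:ℝ) * Real.sin ((ℓ:ℝ)*u))) u := by
      simpa [mul_comm] using hid.cos
    have h1 : HasDerivAt (fun u : ℝ => a/(ℓ:ℝ) * Real.sin ((ℓ:ℝ)*u) + b/(ℓ:ℝ) * Real.cos ((ℓ:ℝ)*u) + c)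
        (a * Real.cos ((ℓ:ℝ)*u) - b * Real.sin ((ℓ:ℝ)*u)) u := by
      have := ((hs.const_mul (a/(ℓ:ℝ))).add (hco.const_mul (b/(ℓ:ℝ)))).add_const c
      refine this.congr_deriv ?_
      field_simp
      ring
    have h2 : HasDerivAt (fun u : ℝ => -(a/(ℓ:ℝ)) * Real.cos ((ℓ:ℝ)*u) + b/(ℓ:ℝ) * Real.sin ((ℓ:ℝ)*u) + d)
        (a * Real.sin ((ℓ:ℝ)*u) + b * Real.cos ((ℓ:ℝ)*u)) u := by
      have := ((hco.const_mul (-(a/(ℓ:ℝ)))).add (hs.const_mul (b/(ℓ:ℝ)))).add_const d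
      refine this.congr_deriv ?_
      field_simp
    have hYF : Y = fun u : ℝ =>
        ((a/(ℓ:ℝ) * Real.sin ((ℓ:ℝ)*u) + b/(ℓ:ℝ) * Real.cos ((ℓ:ℝ)*u) + c,
          -(a/(ℓ:ℝ)) * Real.cos ((ℓ:ℝ)*u) + b/(ℓ:ℝ) * Real.sin ((ℓ:ℝ)*u) + d) : ℝ × ℝ) := by
      funext u
      rw [hY u]
      simp only [Prod.smul_mk, smul_eq_mul, Prod.mk_add_mk, Prod.mk.injEq, mul_neg]
      refine ⟨trivial, ?_⟩; ring
    rw [hYF]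
    exact (h1.prodMk h2).deriv
  have hYu : ∀ u, Y u =
      ((a/(ℓ:ℝ) * Real.sin ((ℓ:ℝ)*u) + b/(ℓ:ℝ) * Real.cos ((ℓ:ℝ)*u) + c,
        -(a/(ℓ:ℝ)) * Real.cos ((ℓ:ℝ)*u) + b/(ℓ:ℝ) * Real.sin ((ℓ:ℝ)*u) + d) : ℝ × ℝ) := by
    intro u
    rw [hY u]
    simp only [Prod.smul_mk, smul_eq_mul, Prod.mk_add_mk, Prod.mk.injEq, mul_neg]
    refine ⟨trivial, ?_⟩; ring
  -- first integral
  have hQ : (∫ u in (0:ℝ)..(2*π), nsq (deriv Y u)) = 2*π * (a^2+b^2) := by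
    have : ∀ u ∈ Set.uIcc (0:ℝ) (2*π), nsq (deriv Y u) = a^2 + b^2 := by
      intro u _
      rw [hderiv u]
      simp only [nsq]
      linear_combination (a^2+b^2) * Real.sin_sq_add_cos_sq ((ℓ:ℝ)*u)
    rw [intervalIntegral.integral_congr this]
    simp
    ring
  -- second integrand
  have hint2 : ∀ u, dotp (Y u) (rot2 (deriv Y u)) =
      -((a^2+b^2)/(ℓ:ℝ)) + (-(c*a) - d*b) * Real.sin ((ℓ:ℝ)*u) + (d*a - c*b) * Real.cos ((ℓ:ℝ)*u) := by
    intro u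
    rw [hYu u, hderiv u]
    simp only [dotp, rot2]
    linear_combination (-(a^2+b^2)/(ℓ:ℝ)) * Real.sin_sq_add_cos_sq ((ℓ:ℝ)*u)
  have hA : (∫ u in (0:ℝ)..(2*π), dotp (Y u) (rot2 (deriv Y u)))
      = -(2*π*(a^2+b^2)/(ℓ:ℝ)) := by
    rw [intervalIntegral.integral_congr (g := fun u =>
      -((a^2+b^2)/(ℓ:ℝ)) + (-(c*a) - d*b) * Real.sin ((ℓ:ℝ)*u) + (d*a - c*b) * Real.cos ((ℓ:ℝ)*u))
      (fun u _ => hint2 u)]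
    have i1 : IntervalIntegrable (fun _ : ℝ => -((a^2+b^2)/(ℓ:ℝ))) MeasureTheory.volume 0 (2*π) :=
      intervalIntegrable_const
    have i2 : IntervalIntegrable (fun u : ℝ => (-(c*a) - d*b) * Real.sin ((ℓ:ℝ)*u)) MeasureTheory.volume 0 (2*π) :=
      (Continuous.intervalIntegrable (by fun_prop) _ _)
    have i3 : IntervalIntegrable (fun u : ℝ => (d*a - c*b) * Real.cos ((ℓ:ℝ)*u)) MeasureTheory.volume 0 (2*π) :=
      (Continuous.intervalIntegrable (by fun_prop) _ _)
    rw [intervalIntegral.integral_add (i1.add i2) i3, intervalIntegral.integral_add i1 i2,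
      intervalIntegral.integral_const_mul, intervalIntegral.integral_const_mul,
      int_sin_ml ℓ hl, int_cos_ml ℓ hl]
    simp
    ring
  refine ⟨by rw [hQ]; ring, by rw [hA]; field_simp, fun hab => ?_⟩
  rw [hQ, hA]
  have hpi : π ≠ 0 := Real.pi_ne_zero
  field_simp
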